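/- Let n ≥ 2 and let P ⊆ ℝ^n be a full-dimensional lattice polytope. Suppose k is an integer with 1 ≤ k ≤ n − 1 such that the dilate kP contains no lattice point in its interior. Then the dilate (n − k)P is normal: for every integer m ≥ 1, every lattice point of m(n−k)P is a sum of m lattice points of (n−k)P. (The combinatorial content of the remark 'in particular (m+1)D is very ample and normally generated' in Corollary 4.4 of the paper, where m = n − 1 − d(P).) -/

import Mathlib

open Pointwise

/-- The set of lattice points of `ℝ^n`, i.e. points with all coordinates integral. -/
def latticePts (n : ℕ) : Set (Fin n → ℝ) := {x | ∀ i, ∃ z : ℤ, x i = (z : ℝ)}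

section helpers
open Set


lemma lat_zero (n : ℕ) : (0 : Fin n → ℝ) ∈ latticePts n := fun _ => ⟨0, by simp⟩

lemma lat_add {n : ℕ} {x y : Fin n → ℝ} (hx : x ∈ latticePts n) (hy : y ∈ latticePts n) :
    x + y ∈ latticePts n := fun i => by
  obtain ⟨a, ha⟩ := hx i; obtain ⟨b, hb⟩ := hy i
  exact ⟨a + b, by simp [ha, hb]⟩

lemma lat_sub {n : ℕ} {x y : Fin n → ℝ} (hx : x ∈ latticePts n) (hy : y ∈ latticePts n) :
    x - y ∈ latticePts n := fun i => by
  obtain ⟨a, ha⟩ := hx i; obtain ⟨b, hb⟩ := hy i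
  exact ⟨a - b, by simp [ha, hb]⟩

lemma lat_intsmul {n : ℕ} (a : ℤ) {x : Fin n → ℝ} (hx : x ∈ latticePts n) :
    (a : ℝ) • x ∈ latticePts n := fun i => by
  obtain ⟨b, hb⟩ := hx i
  exact ⟨a * b, by simp [hb]⟩

lemma lat_sum {n N : ℕ} (f : Fin N → (Fin n → ℝ)) (hf : ∀ j, f j ∈ latticePts n) :
    ∑ j, f j ∈ latticePts n := by
  classical
  induction N with
  | zero => simpa using lat_zero n
  | succ N ih =>
      rw [Fin.sum_univ_succ]
      exact lat_add (hf 0) (ih _ (fun j => hf j.succ))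

/-- choose a sub-vector with prescribed smaller sum -/
lemma exists_le_sum_eq {N : ℕ} (w : Fin N → ℕ) (c : ℕ) (h : c ≤ ∑ i, w i) :
    ∃ a : Fin N → ℕ, (∀ i, a i ≤ w i) ∧ ∑ i, a i = c := by
  classical
  induction c with
  | zero => exact ⟨0, fun i => Nat.zero_le _, by simp⟩
  | succ c ih =>
      obtain ⟨a, ha, hsum⟩ := ih (le_trans (Nat.le_succ c) h)
      have : ∃ i, a i < w i := by
        by_contra hcon
        push_neg at hcon
        have : ∑ i, w i ≤ ∑ i, a i := Finset.sum_le_sum fun i _ => hcon i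
        omega
      obtain ⟨i, hi⟩ := this
      refine ⟨a + Pi.single i 1, fun j => ?_, ?_⟩
      · rcases eq_or_ne j i with rfl | hj
        · simpa using hi
        · simp [Pi.single_apply, hj, ha j]
      · simp only [Pi.add_apply]
        rw [Finset.sum_add_distrib]
        simp [hsum, Pi.single_apply]

/-- split a vector into rows with prescribed row sums -/
lemma split_rows {N : ℕ} : ∀ (m : ℕ) (r : Fin m → ℕ) (w : Fin N → ℕ),
    ∑ j, r j = ∑ i, w i →
    ∃ B : Fin m → Fin N → ℕ, (∀ j, ∑ i, B j i = r j) ∧ (∀ i, ∑ j, B j i = w i) := by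
  intro m
  induction m with
  | zero =>
      intro r w hsum
      refine ⟨fun j => Fin.elim0 j, fun j => Fin.elim0 j, fun i => ?_⟩
      simp only [Finset.univ_eq_empty, Finset.sum_empty] at hsum ⊢
      have : ∀ i ∈ Finset.univ, w i = 0 := by
        rw [← Finset.sum_eq_zero_iff]; omega
      exact (this i (Finset.mem_univ i)).symm
  | succ m ih =>
      intro r w hsum
      have h0 : r 0 ≤ ∑ i, w i := by
        rw [← hsum, Fin.sum_univ_succ]; omega
      obtain ⟨a, ha, hasum⟩ := exists_le_sum_eq w (r 0) h0
      have hs' : ∑ j : Fin m, r j.succ = ∑ i, (w i - a i) := by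
        have h1 : ∑ i, (w i - a i) = ∑ i, w i - ∑ i, a i :=
          Finset.sum_tsub_distrib _ (fun i _ => ha i)
        rw [Fin.sum_univ_succ] at hsum
        omega
      obtain ⟨B, hB1, hB2⟩ := ih (fun j => r j.succ) (fun i => w i - a i) hs'
      refine ⟨Fin.cases a B, fun j => ?_, fun i => ?_⟩
      · induction j using Fin.cases with
        | zero => simpa using hasum
        | succ j => simpa using hB1 j
      · rw [Fin.sum_univ_succ]
        simp only [Fin.cases_zero, Fin.cases_succ]
        have := hB2 i
        have := ha i
        omega


lemma extend_basis {n : ℕ} {A s : Set (Fin n → ℝ)}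
    (hA : affineSpan ℝ A = ⊤) (hsA : s ⊆ A) {p₁ : Fin n → ℝ} (hp₁ : p₁ ∈ s)
    (h : AffineIndependent ℝ ((↑) : s → (Fin n → ℝ))) :
    ∃ u : Set (Fin n → ℝ), s ⊆ u ∧ u ⊆ A ∧ AffineIndependent ℝ ((↑) : u → (Fin n → ℝ)) ∧
      affineSpan ℝ u = ⊤ := by
  rw [affineIndependent_set_iff_linearIndependent_vsub ℝ hp₁] at h
  have hsub : (fun p => (p -ᵥ p₁)) '' (s \ {p₁}) ⊆ (fun p => (p -ᵥ p₁)) '' (A \ {p₁}) :=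
    Set.image_mono (Set.diff_subset_diff_left hsA)
  obtain ⟨b, hbT, hsb, hTspan, hbind⟩ := exists_linearIndepOn_id_extension h hsub
  replace hbind : LinearIndependent ℝ ((↑) : b → (Fin n → ℝ)) := hbind
  have hb0 : ∀ v ∈ b, v ≠ 0 := fun v hv => hbind.ne_zero ⟨v, hv⟩
  have hspanb : Submodule.span ℝ b = ⊤ := by
    have h1 : vectorSpan ℝ A = ⊤ := by
      rw [← direction_affineSpan, hA, AffineSubspace.direction_top]
    have h2 : vectorSpan ℝ A = Submodule.span ℝ ((fun p => (p -ᵥ p₁)) '' (A \ {p₁})) :=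
      vectorSpan_eq_span_vsub_set_right_ne ℝ (hsA hp₁)
    rw [eq_top_iff, ← h1, h2]
    exact Submodule.span_le.mpr hTspan
  refine ⟨{p₁} ∪ (fun v => v +ᵥ p₁) '' b, ?_, ?_, ?_, ?_⟩
  · intro q hq
    rcases eq_or_ne q p₁ with rfl | hne
    · exact Or.inl rfl
    · exact Or.inr ⟨q -ᵥ p₁, hsb ⟨q, ⟨hq, hne⟩, rfl⟩, vsub_vadd q p₁⟩
  · rintro q (rfl | ⟨v, hv, rfl⟩)
    · exact hsA hp₁
    · obtain ⟨a, ha, rfl⟩ := hbT hv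
      simpa [vsub_vadd] using ha.1
  · exact (linearIndependent_set_iff_affineIndependent_vadd_union_singleton ℝ hb0 p₁).mp hbind
  · exact affineSpan_singleton_union_vadd_eq_top_of_span_eq_top p₁
      (by rwa [Subtype.range_coe])

lemma exists_containing_basis {n : ℕ} (S : Finset (Fin n → ℝ))
    (hspan : affineSpan ℝ (↑S : Set (Fin n → ℝ)) = ⊤)
    {y : Fin n → ℝ} (hy : y ∈ convexHull ℝ (↑S : Set (Fin n → ℝ))) :
    ∃ v : Fin (n + 1) → (Fin n → ℝ), AffineIndependent ℝ v ∧
      (∀ i, v i ∈ (↑S : Set (Fin n → ℝ))) ∧ affineSpan ℝ (Set.range v) = ⊤ ∧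
      y ∈ convexHull ℝ (Set.range v) := by
  classical
  rw [convexHull_eq_union] at hy
  simp only [Set.mem_iUnion] at hy
  obtain ⟨t, htS, htind, hyt⟩ := hy
  have htne : (↑t : Set (Fin n → ℝ)).Nonempty := by
    rcases t.eq_empty_or_nonempty with rfl | h
    · simp at hyt
    · exact ⟨h.choose, h.choose_spec⟩
  obtain ⟨p₁, hp₁⟩ := htne
  obtain ⟨u, htu, huS, huind, huspan⟩ := extend_basis hspan htS hp₁ htind
  have hufin : u.Finite := S.finite_toSet.subset huS
  haveI : Fintype u := hufin.fintype
  haveI : Nonempty u := ⟨⟨p₁, htu hp₁⟩⟩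
  have hrangeu : Set.range ((↑) : u → (Fin n → ℝ)) = u := Subtype.range_coe
  have hcard : Fintype.card u = n + 1 := by
    have h1 := huind.finrank_vectorSpan_add_one (k := ℝ)
    rw [hrangeu] at h1
    have h2 : vectorSpan ℝ u = ⊤ := by
      rw [← direction_affineSpan, huspan, AffineSubspace.direction_top]
    rw [h2] at h1
    rw [← h1, finrank_top, Module.finrank_fin_fun]
  have e : Fin (n + 1) ≃ u := (Fintype.equivFinOfCardEq hcard).symm
  refine ⟨fun i => ((e i : u) : Fin n → ℝ), ?_, ?_, ?_, ?_⟩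
  · exact huind.comp_embedding e.toEmbedding
  · exact fun i => huS (e i).2
  · have h3 : Set.range (fun i => ((e i : u) : Fin n → ℝ)) = u := by
      have h4 : (fun i => ((e i : u) : Fin n → ℝ)) = ((↑) : u → (Fin n → ℝ)) ∘ ⇑e := rfl
      rw [h4, Set.range_comp, Equiv.range_eq_univ, Set.image_univ, hrangeu]
    rw [h3]; exact huspan
  · have h3 : Set.range (fun i => ((e i : u) : Fin n → ℝ)) = u := by
      have h4 : (fun i => ((e i : u) : Fin n → ℝ)) = ((↑) : u → (Fin n → ℝ)) ∘ ⇑e := rfl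
      rw [h4, Set.range_comp, Equiv.range_eq_univ, Set.image_univ, hrangeu]
    rw [h3]
    exact convexHull_mono htu hyt

lemma sum_smul_mem_smul_convexHull {n N : ℕ} {A : Set (Fin n → ℝ)} (v : Fin N → (Fin n → ℝ))
    (hv : ∀ i, v i ∈ A) (γ : Fin N → ℝ) (h0 : ∀ i, 0 ≤ γ i) {c : ℝ} (hc : 0 < c)
    (hsum : ∑ i, γ i = c) : ∑ i, γ i • v i ∈ c • convexHull ℝ A := by
  have hmem : Finset.univ.centerMass γ v ∈ convexHull ℝ A :=
    Finset.centerMass_mem_convexHull _ (fun i _ => h0 i) (by rw [hsum]; exact hc)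
      (fun i _ => hv i)
  refine ⟨_, hmem, ?_⟩
  rw [Finset.centerMass, hsum]
  show c • (c⁻¹ • ∑ i, γ i • v i) = ∑ i, γ i • v i
  rw [smul_smul, mul_inv_cancel₀ hc.ne', one_smul]

lemma pos_combo_mem_interior {n N : ℕ} (b : AffineBasis (Fin N) ℝ (Fin n → ℝ))
    (μ : Fin N → ℝ) (h0 : ∀ i, 0 < μ i) (hsum : ∑ i, μ i = 1) :
    ∑ i, μ i • b i ∈ interior (convexHull ℝ (Set.range ⇑b)) := by
  rw [AffineBasis.interior_convexHull]
  simp only [Set.mem_setOf_eq]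
  intro i
  have h1 := Finset.affineCombination_eq_linear_combination Finset.univ (⇑b) μ hsum
  rw [← h1, b.coord_apply_combination_of_mem (Finset.mem_univ i) hsum]
  exact h0 i

end helpers

/-- If `P ⊆ ℝ^n` (`n ≥ 2`) is a full-dimensional lattice polytope and `1 ≤ k ≤ n - 1` is
such that `kP` contains no lattice point in its interior, then `(n - k)P` is normal. -/
theorem dilate_n_sub_k_is_normal
    (n : ℕ) (hn : 2 ≤ n)
    (S : Finset (Fin n → ℝ)) (hS : S.Nonempty)
    (hSlat : (S : Set (Fin n → ℝ)) ⊆ latticePts n)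
    (P : Set (Fin n → ℝ)) (hP : P = convexHull ℝ (S : Set (Fin n → ℝ)))
    (hPfull : (interior P).Nonempty)
    (k : ℕ) (hk1 : 1 ≤ k) (hkn : k ≤ n - 1)
    (hk : ∀ x ∈ interior ((k : ℝ) • P), x ∉ latticePts n) :
    ∀ m : ℕ, 1 ≤ m →
      ∀ x ∈ ((m : ℝ) • ((((n - k : ℕ)) : ℝ) • P)) ∩ latticePts n,
        ∃ f : Fin m → (Fin n → ℝ),
          (∀ i, f i ∈ ((((n - k : ℕ)) : ℝ) • P) ∩ latticePts n) ∧ x = ∑ i, f i := by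
  classical
  intro m hm x hx
  obtain ⟨hx1, hxlat⟩ := hx
  set c : ℕ := n - k with hcdef
  have hc1 : 1 ≤ c := by rw [hcdef]; omega
  rw [Set.mem_smul_set] at hx1
  obtain ⟨y1, hy1, hx1e⟩ := hx1
  rw [Set.mem_smul_set] at hy1
  obtain ⟨y, hyP, hy1e⟩ := hy1
  set M : ℕ := m * c with hMdef
  have hxy : x = (M : ℝ) • y := by
    rw [← hx1e, ← hy1e, smul_smul, hMdef]
    norm_cast
  have hyS : y ∈ convexHull ℝ (↑S : Set (Fin n → ℝ)) := by rwa [hP] at hyP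
  have hspanS : affineSpan ℝ (↑S : Set (Fin n → ℝ)) = ⊤ := by
    rw [← interior_convexHull_nonempty_iff_affineSpan_eq_top, ← hP]
    exact hPfull
  obtain ⟨v, hvind, hvS, hvspan, hyv⟩ := exists_containing_basis S hspanS hyS
  set b : AffineBasis (Fin (n + 1)) ℝ (Fin n → ℝ) := ⟨v, hvind, hvspan⟩ with hbdef
  have hbv : ⇑b = v := rfl
  set μ : Fin (n + 1) → ℝ := fun i => b.coord i y with hμdef
  have hμ1 : ∑ i, μ i = 1 := b.sum_coord_apply_eq_one y
  have hμ0 : ∀ i, 0 ≤ μ i := by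
    have hy' : y ∈ {x | ∀ i, 0 ≤ b.coord i x} := by
      rw [← AffineBasis.convexHull_eq_nonneg_coord]
      rwa [hbv]
    exact hy'
  have hyrep : y = ∑ i, μ i • v i := by
    have h1 := b.affineCombination_coord_eq_self y
    rw [Finset.affineCombination_eq_linear_combination _ _ _ hμ1] at h1
    rw [← h1, hbv]
  set lam : Fin (n + 1) → ℝ := fun i => (M : ℝ) * μ i with hlamdef
  have hlam0 : ∀ i, 0 ≤ lam i := fun i => mul_nonneg (by positivity) (hμ0 i)
  have hxsum : x = ∑ i, lam i • v i := by
    rw [hxy, hyrep, Finset.smul_sum]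
    simp only [hlamdef]
    exact Finset.sum_congr rfl fun i _ => smul_smul _ _ _
  have hlamsum : ∑ i, lam i = (M : ℝ) := by
    simp only [hlamdef]
    rw [← Finset.mul_sum, hμ1, mul_one]
  set fr : Fin (n + 1) → ℝ := fun i => Int.fract (lam i) with hfrdef
  set fl : Fin (n + 1) → ℤ := fun i => ⌊lam i⌋ with hfldef
  have hfl0 : ∀ i, 0 ≤ fl i := fun i => Int.floor_nonneg.mpr (hlam0 i)
  have hfr0 : ∀ i, 0 ≤ fr i := fun i => Int.fract_nonneg _
  have hfr1 : ∀ i, fr i < 1 := fun i => Int.fract_lt_one _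
  have hsplit : ∀ i, ((fl i : ℝ)) + fr i = lam i := fun i => Int.floor_add_fract _
  set z : Fin n → ℝ := x - ∑ i, ((fl i : ℝ)) • v i with hzdef
  have hzlat : z ∈ latticePts n :=
    lat_sub hxlat (lat_sum _ fun i => lat_intsmul _ (hSlat (hvS i)))
  have hzrep : z = ∑ i, fr i • v i := by
    rw [hzdef, hxsum, ← Finset.sum_sub_distrib]
    exact Finset.sum_congr rfl fun i _ => by rw [← sub_smul, ← hsplit i]; ring_nf
  set sZ : ℤ := (M : ℤ) - ∑ i, fl i with hsZdef
  have hsZreal : (sZ : ℝ) = ∑ i, fr i := by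
    have h1 : ∑ i, fr i = ∑ i, (lam i - (fl i : ℝ)) :=
      Finset.sum_congr rfl fun i _ => by rw [← hsplit i]; ring
    rw [h1, Finset.sum_sub_distrib, hlamsum, hsZdef]
    push_cast
    ring
  have hsZ0 : 0 ≤ sZ := by
    have h2 : (0 : ℝ) ≤ (sZ : ℝ) := hsZreal ▸ Finset.sum_nonneg fun i _ => hfr0 i
    exact_mod_cast h2
  have hsZn : sZ ≤ n := by
    have h2 : (sZ : ℝ) < (n : ℝ) + 1 := by
      rw [hsZreal]
      calc ∑ i, fr i < ∑ _i : Fin (n + 1), (1 : ℝ) :=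
            Finset.sum_lt_sum_of_nonempty Finset.univ_nonempty (fun i _ => hfr1 i)
        _ = (n : ℝ) + 1 := by simp
    have h3 : (sZ : ℝ) < ((n : ℤ) : ℝ) + 1 := by exact_mod_cast h2
    have h4 : sZ < (n : ℤ) + 1 := by exact_mod_cast h3
    omega
  set s : ℕ := sZ.toNat with hsdef
  have hs : (s : ℤ) = sZ := Int.toNat_of_nonneg hsZ0
  have hsreal : (s : ℝ) = ∑ i, fr i := by
    rw [← hsZreal]
    exact_mod_cast congrArg (fun a : ℤ => (a : ℝ)) hs
  have hsn : s ≤ n := by omega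
  set W : Fin (n + 1) → ℕ := fun i => (fl i).toNat with hWdef
  have hWZ : ∀ i, ((W i : ℤ)) = fl i := fun i => Int.toNat_of_nonneg (hfl0 i)
  have hWsumZ : ∑ i, ((W i : ℤ)) = (M : ℤ) - sZ := by
    calc ∑ i, ((W i : ℤ)) = ∑ i, fl i := Finset.sum_congr rfl fun i _ => hWZ i
      _ = (M : ℤ) - sZ := by rw [hsZdef]; ring
  have h7c : ((∑ i, W i : ℕ) : ℤ) = ∑ i, ((W i : ℤ)) := by push_cast; rfl
  have hsM : s ≤ M := by
    have h5 : (0 : ℤ) ≤ ∑ i, ((W i : ℤ)) := Finset.sum_nonneg fun i _ => Int.ofNat_nonneg _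
    omega
  have hWsum : ∑ i, W i = M - s := by omega
  rcases le_or_gt s c with hcase | hcase
  · -- decomposition case
    obtain ⟨m', rfl⟩ : ∃ m', m = m' + 1 := ⟨m - 1, by omega⟩
    set r : Fin (m' + 1) → ℕ := Fin.cons (c - s) (fun _ => c) with hrdef
    have hrsum : ∑ j, r j = ∑ i, W i := by
      rw [Fin.sum_univ_succ]
      simp only [hrdef, Fin.cons_zero, Fin.cons_succ]
      rw [Finset.sum_const, Finset.card_univ, Fintype.card_fin, smul_eq_mul, hWsum]
      have h7 : M = c + m' * c := by rw [hMdef]; ring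
      rw [h7]
      exact (Nat.sub_add_comm hcase).symm
    obtain ⟨B, hB1, hB2⟩ := split_rows (m' + 1) r W hrsum
    refine ⟨fun j => (if j = 0 then z else 0) + ∑ i, ((B j i : ℝ)) • v i,
      fun j => ⟨?_, ?_⟩, ?_⟩
    · -- membership in c • P
      have hcpos : (0 : ℝ) < (c : ℕ) := by exact_mod_cast hc1
      rcases Fin.eq_zero_or_eq_succ j with rfl | ⟨j', rfl⟩
      · show (if (0 : Fin (m' + 1)) = 0 then z else 0) + ∑ i, ((B 0 i : ℝ)) • v i
          ∈ ((c : ℕ) : ℝ) • P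
        have he : (if (0 : Fin (m' + 1)) = 0 then z else 0) + ∑ i, ((B 0 i : ℝ)) • v i
            = ∑ i, (fr i + (B 0 i : ℝ)) • v i := by
          rw [if_pos rfl, hzrep, ← Finset.sum_add_distrib]
          exact Finset.sum_congr rfl fun i _ => (add_smul _ _ _).symm
        rw [he, hP]
        apply sum_smul_mem_smul_convexHull v hvS _
          (fun i => add_nonneg (hfr0 i) (by positivity)) hcpos
        rw [Finset.sum_add_distrib, ← hsreal]
        have h8 : ∑ i, ((B 0 i : ℕ) : ℝ) = ((c - s : ℕ) : ℝ) := by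
          rw [← Nat.cast_sum]
          have := hB1 0
          rw [hrdef, Fin.cons_zero] at this
          exact_mod_cast congrArg (fun a : ℕ => (a : ℝ)) this
        rw [h8, Nat.cast_sub hcase]
        ring
      · show (if j'.succ = (0 : Fin (m' + 1)) then z else 0) + ∑ i, ((B j'.succ i : ℝ)) • v i
          ∈ ((c : ℕ) : ℝ) • P
        have he : (if j'.succ = (0 : Fin (m' + 1)) then z else 0) + ∑ i, ((B j'.succ i : ℝ)) • v i
            = ∑ i, ((B j'.succ i : ℝ)) • v i := by
          rw [if_neg (Fin.succ_ne_zero j'), zero_add]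
        rw [he, hP]
        apply sum_smul_mem_smul_convexHull v hvS _ (fun i => by positivity) hcpos
        have h9 := hB1 j'.succ
        rw [hrdef, Fin.cons_succ] at h9
        rw [← Nat.cast_sum]
        exact_mod_cast congrArg (fun a : ℕ => (a : ℝ)) h9
    · -- lattice
      show (if j = 0 then z else 0) + ∑ i, ((B j i : ℝ)) • v i ∈ latticePts n
      apply lat_add
      · split_ifs
        · exact hzlat
        · exact lat_zero n
      · apply lat_sum; intro i
        have h10 : ((B j i : ℕ) : ℝ) = (((B j i : ℕ) : ℤ) : ℝ) := by push_cast; ring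
        rw [h10]
        exact lat_intsmul _ (hSlat (hvS i))
    · -- sum equals x
      show x = ∑ j, ((if j = 0 then z else 0) + ∑ i, ((B j i : ℝ)) • v i)
      rw [Finset.sum_add_distrib, Finset.sum_ite_eq' Finset.univ (0 : Fin (m' + 1))
        (fun _ => z)]
      simp only [Finset.mem_univ, if_true]
      rw [Finset.sum_comm]
      have h11 : ∀ i, (∑ j, ((B j i : ℕ) : ℝ) • v i) = ((W i : ℕ) : ℝ) • v i := fun i => by
        rw [← Finset.sum_smul, ← Nat.cast_sum, hB2 i]
      rw [Finset.sum_congr rfl fun i _ => h11 i]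
      have h12 : ∀ i, ((W i : ℕ) : ℝ) = ((fl i : ℤ) : ℝ) := fun i => by
        exact_mod_cast congrArg (fun a : ℤ => (a : ℝ)) (hWZ i)
      rw [Finset.sum_congr rfl fun i _ => by rw [h12 i], hzdef]
      abel
  · -- contradiction case
    exfalso
    have htk : n + 1 - s ≤ k := by omega
    set d : ℕ := k - (n + 1 - s) with hddef
    have h5 : d + (n + 1) = k + s := by omega
    have hdreal : (d : ℝ) = (k : ℝ) + (s : ℝ) - (n : ℝ) - 1 := by
      have h6 : ((d + (n + 1) : ℕ) : ℝ) = ((k + s : ℕ) : ℝ) := by rw [h5]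
      push_cast at h6
      linarith
    set num : Fin (n + 1) → ℝ := fun i => (1 - fr i) + (if i = 0 then (d : ℝ) else 0)
      with hnumdef
    have hnum0 : ∀ i, 0 < num i := fun i => by
      have h1 : 0 < 1 - fr i := by linarith [hfr1 i]
      have h2 : (0 : ℝ) ≤ (if i = 0 then (d : ℝ) else 0) := by
        split_ifs
        · positivity
        · exact le_refl _
      simp only [hnumdef]
      linarith
    have hnumsum : ∑ i, num i = (k : ℝ) := by
      simp only [hnumdef]
      rw [Finset.sum_add_distrib, Finset.sum_sub_distrib, Finset.sum_const, Finset.card_univ,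
        Fintype.card_fin, Finset.sum_ite_eq' Finset.univ (0 : Fin (n + 1)) (fun _ => (d : ℝ))]
      simp only [Finset.mem_univ, if_true, nsmul_eq_mul, mul_one]
      rw [← hsreal]
      push_cast
      linarith
    have hkpos : (0 : ℝ) < (k : ℕ) := by exact_mod_cast hk1
    set μ' : Fin (n + 1) → ℝ := fun i => ((k : ℝ))⁻¹ * num i with hμ'def
    have hμ'0 : ∀ i, 0 < μ' i := fun i => mul_pos (inv_pos.mpr hkpos) (hnum0 i)
    have hμ'1 : ∑ i, μ' i = 1 := by
      simp only [hμ'def]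
      rw [← Finset.mul_sum, hnumsum, inv_mul_cancel₀ hkpos.ne']
    have hqint : ∑ i, μ' i • v i ∈ interior (convexHull ℝ (Set.range v)) := by
      have h13 := pos_combo_mem_interior b μ' hμ'0 hμ'1
      rwa [hbv] at h13
    have hsubP : convexHull ℝ (Set.range v) ⊆ P := by
      rw [hP]; exact convexHull_mono (Set.range_subset_iff.mpr hvS)
    have hqintP : ∑ i, μ' i • v i ∈ interior P := interior_mono hsubP hqint
    have hpeq : ∑ i, num i • v i = (k : ℝ) • ∑ i, μ' i • v i := by
      rw [Finset.smul_sum]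
      refine Finset.sum_congr rfl fun i _ => ?_
      rw [smul_smul, hμ'def, ← mul_assoc, mul_inv_cancel₀ hkpos.ne', one_mul]
    have hpint : ∑ i, num i • v i ∈ interior ((k : ℝ) • P) := by
      rw [interior_smul₀ hkpos.ne' P]
      exact ⟨_, hqintP, hpeq.symm⟩
    apply hk _ hpint
    -- lattice point
    have hA : ∑ i, num i • v i = ((∑ i, v i) - z) + (d : ℝ) • v 0 := by
      have h1 : ∀ i : Fin (n + 1), num i • v i
          = (v i - fr i • v i) + (if i = 0 then (d : ℝ) • v i else 0) := fun i => by
        simp only [hnumdef]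
        rw [add_smul, sub_smul, one_smul, ite_smul, zero_smul]
      rw [Finset.sum_congr rfl fun i _ => h1 i, Finset.sum_add_distrib,
        Finset.sum_sub_distrib, Finset.sum_ite_eq' Finset.univ (0 : Fin (n + 1))
        (fun i => (d : ℝ) • v i)]
      simp only [Finset.mem_univ, if_true]
      rw [hzrep]
    rw [hA]
    have h0 : ((d : ℕ) : ℝ) • v 0 ∈ latticePts n := by
      have h14 : ((d : ℕ) : ℝ) = (((d : ℕ) : ℤ) : ℝ) := by push_cast; ring
      rw [h14]
      exact lat_intsmul _ (hSlat (hvS 0))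
    exact lat_add (lat_sub (lat_sum v fun i => hSlat (hvS i)) hzlat) h0
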